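/- Let F be a finite extension of Q_p and let (c_n)_{n≥0} be the polynomials in F[a] defined by [a](T) = Σ_{n≥0} c_n(a) T^n, where [a](T) is the multiplication-by-a power series of a Lubin-Tate formal O_F-module. Then each c_n is a polynomial of degree at most n and c_n(O_F) ⊆ O_F. -/

import Mathlib

/-- Substitution of a polynomial `P` (with zero constant term) into a formal power series,
defined coefficientwise. -/
noncomputable def compPoly {F : Type*} [CommRing F] (f : PowerSeries F) (P : Polynomial F) :
    PowerSeries F :=
  PowerSeries.mk fun n => ∑ k ∈ Finset.range (n + 1),
    PowerSeries.coeff (R := F) k f * Polynomial.coeff (P ^ k) n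

/-- degree bound for coefficients of a product -/
lemma degMul {F : Type*} [CommRing F] (f g : PowerSeries (Polynomial F))
    (hf : ∀ k, ((PowerSeries.coeff k) f).natDegree ≤ k)
    (hg : ∀ k, ((PowerSeries.coeff k) g).natDegree ≤ k) :
    ∀ k, ((PowerSeries.coeff k) (f * g)).natDegree ≤ k := by
  intro k
  rw [PowerSeries.coeff_mul]
  apply Polynomial.natDegree_sum_le_of_forall_le
  intro p hp
  have := Finset.HasAntidiagonal.mem_antidiagonal.mp hp
  calc (((PowerSeries.coeff p.1) f) * ((PowerSeries.coeff p.2) g)).natDegree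
      ≤ _ + _ := Polynomial.natDegree_mul_le
    _ ≤ p.1 + p.2 := add_le_add (hf p.1) (hg p.2)
    _ = k := this

/-- degree bound for coefficients of a power -/
lemma degPow {F : Type*} [CommRing F] (f : PowerSeries (Polynomial F))
    (hf : ∀ k, ((PowerSeries.coeff k) f).natDegree ≤ k) (m : ℕ) :
    ∀ k, ((PowerSeries.coeff k) (f ^ m)).natDegree ≤ k := by
  induction m with
  | zero =>
    intro k
    rw [pow_zero]
    rcases Nat.eq_zero_or_pos k with h | h
    · subst h; simp
    · rw [PowerSeries.coeff_one, if_neg (by omega)]; simp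
  | succ m ih =>
    rw [pow_succ]
    exact degMul _ _ ih hf

/-- truncation congruence for coefficient `n` of a `q`-th power -/
lemma coeffPowCongr {F : Type*} [CommRing F] (f g : PowerSeries F) {q : ℕ} (hq : 2 ≤ q)
    (h0f : PowerSeries.coeff (R := F) 0 f = 0) (h0g : PowerSeries.coeff (R := F) 0 g = 0)
    {n : ℕ} (h : ∀ k < n, PowerSeries.coeff (R := F) k f = PowerSeries.coeff (R := F) k g) :
    PowerSeries.coeff (R := F) n (f ^ q) = PowerSeries.coeff (R := F) n (g ^ q) := by
  have key : f ^ q - g ^ q = (∑ i ∈ Finset.range q, f ^ i * g ^ (q - 1 - i)) * (f - g) :=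
    (geom_sum₂_mul f g q).symm
  have h0f' : PowerSeries.constantCoeff (R := F) f = 0 := by
    rw [← PowerSeries.coeff_zero_eq_constantCoeff_apply]; exact h0f
  have h0g' : PowerSeries.constantCoeff (R := F) g = 0 := by
    rw [← PowerSeries.coeff_zero_eq_constantCoeff_apply]; exact h0g
  have hS0 : PowerSeries.coeff (R := F) 0 (∑ i ∈ Finset.range q, f ^ i * g ^ (q - 1 - i)) = 0 := by
    rw [map_sum]
    apply Finset.sum_eq_zero
    intro i hi
    rcases Nat.eq_zero_or_pos i with h1 | h1
    · subst h1
      simp [PowerSeries.coeff_zero_eq_constantCoeff, h0g',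
        zero_pow (show q - 1 ≠ 0 by omega)]
    · simp [PowerSeries.coeff_zero_eq_constantCoeff, h0f', zero_pow (show i ≠ 0 by omega)]
  have := congrArg (PowerSeries.coeff (R := F) n) key
  rw [map_sub, PowerSeries.coeff_mul] at this
  have hz : ∑ p ∈ Finset.HasAntidiagonal.antidiagonal n,
      PowerSeries.coeff (R := F) p.1 (∑ i ∈ Finset.range q, f ^ i * g ^ (q - 1 - i)) *
        PowerSeries.coeff (R := F) p.2 (f - g) = 0 := by
    apply Finset.sum_eq_zero
    intro p hp
    have hpn := Finset.HasAntidiagonal.mem_antidiagonal.mp hp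
    rcases Nat.lt_or_ge p.2 n with h2 | h2
    · rw [map_sub, h p.2 h2, sub_self, mul_zero]
    · have : p.1 = 0 := by omega
      rw [this, hS0, zero_mul]
  rw [hz] at this
  exact sub_eq_zero.mp this

/-- the recursively defined coefficient polynomials -/
noncomputable def cfun {F : Type*} [Field F] (π : F) (q : ℕ) : ℕ → Polynomial F
  | 0 => 0
  | 1 => Polynomial.X
  | (n + 2) =>
    Polynomial.C (π ^ (n + 2) - π)⁻¹ *
      (PowerSeries.coeff (R := Polynomial F) (n + 2)
          ((PowerSeries.mk fun k => if _ : k < n + 2 then cfun π q k else 0) ^ q) -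
        ∑ k ∈ Finset.range (n + 2),
          Polynomial.C (Polynomial.coeff
              ((Polynomial.X ^ q + Polynomial.C π * Polynomial.X) ^ k) (n + 2)) *
            (if _ : k < n + 2 then cfun π q k else 0))
  termination_by n => n

lemma wnn {F : Type*} [Field F] (π : F) {q : ℕ} (hq : 2 ≤ q) (n : ℕ) :
    Polynomial.coeff ((Polynomial.X ^ q + Polynomial.C π * Polynomial.X) ^ n) n = π ^ n := by
  obtain ⟨r, rfl⟩ : ∃ r, q = r + 2 := ⟨q - 2, by omega⟩
  have hX : (Polynomial.X ^ (r + 2) + Polynomial.C π * Polynomial.X : Polynomial F) =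
      Polynomial.X * (Polynomial.X ^ (r + 1) + Polynomial.C π) := by ring
  rw [hX, mul_pow]
  have h2 := Polynomial.coeff_X_pow_mul
    ((Polynomial.X ^ (r + 1) + Polynomial.C π) ^ n) n 0
  rw [zero_add] at h2
  rw [h2, Polynomial.coeff_zero_eq_eval_zero]
  simp

theorem statement9 (q : ℕ) (hq : 2 ≤ q) (F : Type*) [Field F] (O : Subring F)
    (hval : ∀ x : F, x ≠ 0 → x ∈ O ∨ x⁻¹ ∈ O)
    (π : F) (hπO : π ∈ O) (hπ0 : π ≠ 0) (hπu : ¬IsUnit (⟨π, hπO⟩ : O))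
    (ψ : F → PowerSeries F)
    (hψO : ∀ a ∈ O, ∀ n : ℕ, PowerSeries.coeff (R := F) n (ψ a) ∈ O)
    (hψ0 : ∀ a ∈ O, PowerSeries.coeff (R := F) 0 (ψ a) = 0)
    (hψ1 : ∀ a ∈ O, PowerSeries.coeff (R := F) 1 (ψ a) = a)
    (hψcomm : ∀ a ∈ O,
      compPoly (ψ a) (Polynomial.X ^ q + Polynomial.C π * Polynomial.X) =
        (ψ a) ^ q + π • ψ a) :
    ∃ c : ℕ → Polynomial F,
      (∀ n, (c n).natDegree ≤ n) ∧
      (∀ n, ∀ a ∈ O, Polynomial.eval a (c n) ∈ O) ∧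
      (∀ a ∈ O, ∀ n : ℕ, PowerSeries.coeff (R := F) n (ψ a) = Polynomial.eval a (c n)) := by
  -- π^m - π ≠ 0 for m ≥ 2
  have hπN : ∀ m : ℕ, 2 ≤ m → π ^ m - π ≠ 0 := by
    intro m hm hzero
    apply hπu
    have h1 : π ^ m = π := sub_eq_zero.mp hzero
    have h2 : π ^ (m - 1) * π = π := by
      rw [← pow_succ, show m - 1 + 1 = m by omega]; exact h1
    have h3 : π ^ (m - 1) = 1 := mul_right_cancel₀ hπ0 (by rw [h2, one_mul])
    have h4 : π * π ^ (m - 2) = 1 := by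
      rw [← pow_succ', show m - 2 + 1 = m - 1 by omega]; exact h3
    exact isUnit_iff_exists_inv.mpr ⟨⟨π ^ (m - 2), pow_mem hπO _⟩, Subtype.ext (by simpa using h4)⟩
  have main : ∀ n : ℕ, (cfun π q n).natDegree ≤ n ∧
      ∀ a ∈ O, PowerSeries.coeff (R := F) n (ψ a) = Polynomial.eval a (cfun π q n) := by
    intro n
    induction n using Nat.strong_induction_on with
    | _ n IH =>
      match n, IH with
      | 0, _ =>
        constructor
        · rw [cfun]; simp
        · intro a ha; rw [cfun, hψ0 a ha]; simp
      | 1, _ =>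
        constructor
        · rw [cfun]; simp
        · intro a ha; rw [cfun, hψ1 a ha]; simp
      | (n + 2), IH =>
        set G : PowerSeries (Polynomial F) :=
          PowerSeries.mk fun k => if _ : k < n + 2 then cfun π q k else 0 with hG
        have hGdeg : ∀ k, ((PowerSeries.coeff k) G).natDegree ≤ k := by
          intro k
          rw [hG, PowerSeries.coeff_mk]
          split
          · exact (IH k (by assumption)).1
          · simp
        constructor
        · rw [cfun]
          refine le_trans (Polynomial.natDegree_C_mul_le _ _) ?_
          refine le_trans (Polynomial.natDegree_sub_le _ _) (max_le ?_ ?_)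
          · exact degPow G hGdeg q (n + 2)
          · apply Polynomial.natDegree_sum_le_of_forall_le
            intro k hk
            refine le_trans (Polynomial.natDegree_C_mul_le _ _) ?_
            rw [dif_pos (Finset.mem_range.mp hk)]
            exact le_trans (IH k (Finset.mem_range.mp hk)).1 (Nat.le_of_lt (Finset.mem_range.mp hk))
        · intro a ha
          have hfk : ∀ k < n + 2,
              PowerSeries.coeff (R := F) k (ψ a) = Polynomial.eval a (cfun π q k) :=
            fun k hk => (IH k hk).2 a ha
          have hmapG : PowerSeries.map (Polynomial.evalRingHom a) G =
              PowerSeries.mk fun k => if k < n + 2 then PowerSeries.coeff (R := F) k (ψ a) else 0 := by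
            ext k
            rw [PowerSeries.coeff_map, hG, PowerSeries.coeff_mk, PowerSeries.coeff_mk]
            by_cases hk : k < n + 2
            · rw [dif_pos hk, if_pos hk, Polynomial.coe_evalRingHom, hfk k hk]
            · rw [dif_neg hk, if_neg hk, map_zero]
          have hGq : Polynomial.eval a
              (PowerSeries.coeff (R := Polynomial F) (n + 2) (G ^ q)) =
              PowerSeries.coeff (R := F) (n + 2) ((ψ a) ^ q) := by
            rw [← Polynomial.coe_evalRingHom, ← PowerSeries.coeff_map, map_pow, hmapG]
            apply coeffPowCongr _ _ hq
            · rw [PowerSeries.coeff_mk, if_pos (by omega)]; exact hψ0 a ha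
            · exact hψ0 a ha
            · intro k hk
              rw [PowerSeries.coeff_mk, if_pos (by omega)]
          have hstar := congrArg (PowerSeries.coeff (R := F) (n + 2)) (hψcomm a ha)
          rw [map_add] at hstar
          simp only [compPoly, PowerSeries.coeff_mk, PowerSeries.coeff_smul,
            smul_eq_mul] at hstar
          rw [Finset.sum_range_succ, wnn π hq (n + 2)] at hstar
          -- hstar : Σ_{k<n+2} f_k w_k + f_{n+2} π^{n+2} = coeff (f^q) + π f_{n+2}
          rw [cfun]
          rw [Polynomial.eval_mul, Polynomial.eval_C, Polynomial.eval_sub, hGq,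
            Polynomial.eval_finset_sum]
          have hsum : ∑ k ∈ Finset.range (n + 2),
              Polynomial.eval a (Polynomial.C (Polynomial.coeff
                ((Polynomial.X ^ q + Polynomial.C π * Polynomial.X) ^ k) (n + 2)) *
                if _ : k < n + 2 then cfun π q k else 0) =
              ∑ k ∈ Finset.range (n + 2), PowerSeries.coeff (R := F) k (ψ a) *
                Polynomial.coeff ((Polynomial.X ^ q + Polynomial.C π * Polynomial.X) ^ k)
                  (n + 2) := by
            apply Finset.sum_congr rfl
            intro k hk
            have hk' := Finset.mem_range.mp hk
            rw [dif_pos hk', Polynomial.eval_mul, Polynomial.eval_C, ← hfk k hk']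
            ring
          rw [hsum]
          have hne : π ^ (n + 2) - π ≠ 0 := hπN (n + 2) (by omega)
          rw [inv_mul_eq_div, eq_div_iff hne]
          linear_combination hstar
  refine ⟨cfun π q, fun n => (main n).1, fun n a ha => ?_, fun a ha n => (main n).2 a ha⟩
  rw [← (main n).2 a ha]
  exact hψO a ha n
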